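/- Let G be a topological group, K a compact open subgroup of G, and Z a subgroup of the center of G such that the subgroup of G generated by Z and K has finite index in G. Let k be a field and V an irreducible smooth representation of G over k such that every element of Z acts on V by multiplication by a scalar in k. Then V is finite-dimensional over k. -/

import Mathlib

section Defs

variable {k : Type*} [Field k] {G : Type*} [Group G] [TopologicalSpace G]
variable {V : Type*} [AddCommGroup V] [Module k V]

/-- A representation of a topological group is smooth if the stabilizer of every
vector is an open subset. -/
def IsSmoothRep (ρ : Representation k G V) : Prop :=
  ∀ v : V, IsOpen {g : G | ρ g v = v}

/-- The subspace of vectors fixed by every element of a subset `S` of `G`. -/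
def fixedBy (ρ : Representation k G V) (S : Set G) : Submodule k V where
  carrier := {v : V | ∀ g ∈ S, ρ g v = v}
  add_mem' := by intro a b ha hb g hg; simp [map_add, ha g hg, hb g hg]
  zero_mem' := by intro g hg; simp
  smul_mem' := by intro c a ha g hg; simp [ha g hg]

/-- A subspace is `G`-stable if it is preserved by the action. -/
def IsStableRep (ρ : Representation k G V) (W : Submodule k V) : Prop :=
  ∀ g : G, ∀ v ∈ W, ρ g v ∈ W

/-- A representation is irreducible if it is nonzero and its only `G`-stable
subspaces are `⊥` and `⊤`. -/
def IsIrreducibleRep (ρ : Representation k G V) : Prop :=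
  (∃ v : V, v ≠ 0) ∧ ∀ W : Submodule k V, IsStableRep ρ W → W = ⊥ ∨ W = ⊤

/-- A representation is admissible if it is smooth and its fixed vectors under every
open subgroup form a finite-dimensional space. -/
def IsAdmissibleRep (ρ : Representation k G V) : Prop :=
  IsSmoothRep ρ ∧
    ∀ J : Subgroup G, IsOpen (J : Set G) → FiniteDimensional k ↥(fixedBy ρ (J : Set G))

/-- A (profinite) topological group is pro-`p` if every open normal subgroup has
index a power of `p`. -/
def IsProP (p : ℕ) (G : Type*) [Group G] [TopologicalSpace G] : Prop :=
  ∀ N : Subgroup G, N.Normal → IsOpen (N : Set G) → ∃ n : ℕ, N.index = p ^ n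

end Defs

/-- if `G` has a compact open subgroup `K` and a central subgroup `Z` such
that `⟨Z, K⟩` has finite index in `G`, then any irreducible smooth representation of `G`
on which `Z` acts by scalars is finite-dimensional. -/
theorem statement10 {G : Type*} [Group G] [TopologicalSpace G] [IsTopologicalGroup G]
    (K : Subgroup G) (hKc : IsCompact (K : Set G)) (hKo : IsOpen (K : Set G))
    (Z : Subgroup G) (hZ : Z ≤ Subgroup.center G)
    (hindex : (Z ⊔ K).FiniteIndex)
    {k : Type*} [Field k]
    {V : Type*} [AddCommGroup V] [Module k V]
    (ρ : Representation k G V) (hsm : IsSmoothRep ρ) (hirr : IsIrreducibleRep ρ)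
    (hscalar : ∀ z ∈ Z, ∃ c : k, ∀ v : V, ρ z v = c • v) :
    FiniteDimensional k V := by
  classical
  obtain ⟨⟨v, hv⟩, hstab⟩ := hirr
  -- basic fact: ρ g⁻¹ ∘ ρ g = id
  have hinv : ∀ (g : G) (w : V), ρ g⁻¹ (ρ g w) = w := by
    intro g w
    have : ρ g⁻¹ * ρ g = 1 := by rw [← map_mul, inv_mul_cancel, map_one]
    calc ρ g⁻¹ (ρ g w) = (ρ g⁻¹ * ρ g) w := rfl
      _ = w := by rw [this]; rfl
  -- the orbit of v under K hits only finitely many values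
  have hopen : ∀ c ∈ (K : Set G), IsOpen {g : G | ρ g v = ρ c v} := by
    intro c _
    have : {g : G | ρ g v = ρ c v} = (fun g => c⁻¹ * g) ⁻¹' {g : G | ρ g v = v} := by
      ext g
      simp only [Set.mem_setOf_eq, Set.mem_preimage, map_mul]
      constructor
      · intro h
        show ρ c⁻¹ (ρ g v) = v
        rw [h, hinv]
      · intro h
        have h' : ρ c⁻¹ (ρ g v) = v := h
        have h2 := congrArg (ρ c) h'
        have h3 : ρ c (ρ c⁻¹ (ρ g v)) = ρ g v := by
          have h4 := hinv c⁻¹ (ρ g v)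
          rwa [inv_inv] at h4
        rw [h3] at h2
        exact h2
    rw [this]
    exact (hsm v).preimage (by continuity)
  have hcov : (K : Set G) ⊆ ⋃ c ∈ (K : Set G), {g : G | ρ g v = ρ c v} := by
    intro g hg
    exact Set.mem_biUnion hg rfl
  obtain ⟨t, htK, htfin, hts⟩ := hKc.elim_finite_subcover_image hopen hcov
  -- W₀ : span of the finitely many values on K
  set F : Set V := (fun c => ρ c v) '' t with hF
  have hFfin : F.Finite := htfin.image _
  have hKW : ∀ g ∈ K, ρ g v ∈ F := by
    intro g hg
    obtain ⟨c, hc, hgc⟩ := Set.mem_iUnion₂.mp (hts hg)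
    exact ⟨c, hc, hgc.symm⟩
  -- every element of Z ⊔ K acts like a scalar times an element of K
  have hZK : ∀ g ∈ Z ⊔ K, ∃ c : k, ∃ x, x ∈ K ∧ ∀ w : V, ρ g w = c • ρ x w := by
    intro g hg
    rw [Subgroup.sup_eq_closure] at hg
    induction hg using Subgroup.closure_induction with
    | mem x hx =>
      rcases hx with hx | hx
      · obtain ⟨c, hc⟩ := hscalar x hx
        exact ⟨c, 1, one_mem K, fun w => by rw [hc, map_one]; rfl⟩
      · exact ⟨1, x, hx, fun w => by rw [one_smul]⟩
    | one => exact ⟨1, 1, one_mem K, fun w => by rw [one_smul]⟩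
    | mul x y hx hy ihx ihy =>
      obtain ⟨c, a, ha, hca⟩ := ihx
      obtain ⟨d, b, hb, hdb⟩ := ihy
      refine ⟨c * d, a * b, mul_mem ha hb, fun w => ?_⟩
      rw [map_mul, map_mul]
      calc ρ x (ρ y w) = c • ρ a (d • ρ b w) := by rw [hdb w, hca]
        _ = (c * d) • ρ a (ρ b w) := by rw [map_smul, smul_smul]
    | inv x hx ihx =>
      obtain ⟨c, a, ha, hca⟩ := ihx
      have hc0 : c ≠ 0 := by
        intro h0
        apply hv
        have := hca (ρ x⁻¹ v)
        rw [hinv x⁻¹ v |>.symm] at this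
        rw [inv_inv] at this
        have h1 : v = c • ρ a (ρ x⁻¹ v) := by
          have h2 := hca (ρ x⁻¹ v)
          have h3 : ρ x (ρ x⁻¹ v) = v := by
            have := hinv x⁻¹ v; rwa [inv_inv] at this
          rw [h3] at h2
          exact h2
        rw [h0, zero_smul] at h1
        exact h1
      refine ⟨c⁻¹, a⁻¹, inv_mem ha, fun w => ?_⟩
      have key : ρ x (c⁻¹ • ρ a⁻¹ w) = w := by
        rw [map_smul, hca, smul_smul, mul_comm, ← smul_smul]
        have : ρ a (ρ a⁻¹ w) = w := by
          have := hinv a⁻¹ w; rwa [inv_inv] at this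
        rw [this, smul_smul, mul_inv_cancel₀ hc0, one_smul]
      calc ρ x⁻¹ w = ρ x⁻¹ (ρ x (c⁻¹ • ρ a⁻¹ w)) := by rw [key]
        _ = c⁻¹ • ρ a⁻¹ w := hinv x _
  -- finitely many coset representatives
  haveI hfinq : Finite (G ⧸ (Z ⊔ K)) :=
    (Nat.card_ne_zero.mp hindex.index_ne_zero).2
  set S : Set V := ⋃ q : G ⧸ (Z ⊔ K), (fun w => ρ (Quotient.out q) w) '' F with hS
  have hSfin : S.Finite := Set.finite_iUnion fun q => hFfin.image _
  -- every ρ g v lies in span S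
  have hspan : ∀ g : G, ρ g v ∈ Submodule.span k S := by
    intro g
    set q : G ⧸ (Z ⊔ K) := QuotientGroup.mk g with hq
    set r : G := Quotient.out q with hr
    have hrg : r⁻¹ * g ∈ Z ⊔ K := by
      rw [← QuotientGroup.eq]
      rw [hr, QuotientGroup.out_eq']
    obtain ⟨c, x, hx, hcx⟩ := hZK _ hrg
    have h1 : ρ g v = ρ r (ρ (r⁻¹ * g) v) := by
      rw [← Module.End.mul_apply, ← map_mul, mul_inv_cancel_left]
    rw [h1, hcx v, map_smul]
    refine Submodule.smul_mem _ c ?_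
    refine Submodule.subset_span ?_
    exact Set.mem_iUnion.mpr ⟨q, ⟨ρ x v, hKW x hx, rfl⟩⟩
  -- the span of the orbit is stable and nonzero, hence ⊤
  set W : Submodule k V := Submodule.span k (Set.range fun g => ρ g v) with hW
  have hWstable : IsStableRep ρ W := by
    intro g w hw
    have : Submodule.map (ρ g) W ≤ W := by
      rw [hW, Submodule.map_span]
      apply Submodule.span_mono
      rintro _ ⟨_, ⟨h, rfl⟩, rfl⟩
      refine ⟨g * h, ?_⟩
      show ρ (g * h) v = ρ g (ρ h v)
      rw [map_mul]
      rfl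
    exact this ⟨w, hw, rfl⟩
  have hWtop : W = ⊤ := by
    rcases hstab W hWstable with h | h
    · exfalso
      apply hv
      have : v ∈ W := Submodule.subset_span ⟨1, show ρ (1 : G) v = v by rw [map_one]; rfl⟩
      rw [h] at this
      simpa using this
    · exact h
  have htop : (⊤ : Submodule k V) ≤ Submodule.span k S := by
    rw [← hWtop, hW]
    apply Submodule.span_le.mpr
    rintro _ ⟨g, rfl⟩
    exact hspan g
  have hSStop : Submodule.span k S = ⊤ := le_antisymm le_top htop
  have : Module.Finite k V := by
    rw [Module.finite_def, Submodule.fg_def]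
    exact ⟨S, hSfin, hSStop⟩
  exact this
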